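/- Let g(x) ∈ 𝔽_q[x] be monic irreducible of degree r with g(0) ≠ 0, let l ≥ 2, let α ∈ 𝔽_q satisfy 𝔽_q = 𝔽_p(α), and set a_{i,j,k}(x) = 1 + α^i x^j g(x)^k for 0 ≤ i < δ, 0 ≤ j < r, 1 ≤ k < l with p ∤ k. Then for any natural-number exponents c_{(ijk)}, one has Π_{i,j,k} a_{i,j,k}(x)^{c_{(ijk)}} ≡ 1 (mod g(x)^l) if and only if, for every triple (i,j,k), c_{(ijk)} ≡ 0 (mod ord(a_{i,j,k})), where ord(a_{i,j,k}) is the multiplicative order of the class of a_{i,j,k}(x) in the unit group of 𝔽_q[x]/(g(x)^l). -/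

import Mathlib

open Polynomial

/-- The index set of triples `(i, j, k)` with `0 ≤ i < δ`, `0 ≤ j < r`,
`1 ≤ k < l` and `p ∤ k`. -/
abbrev Triples (p δ r l : ℕ) : Type :=
  {v : Fin δ × Fin r × Fin l // 0 < (v.2.2 : ℕ) ∧ ¬ p ∣ (v.2.2 : ℕ)}

-- expansion lemmas
lemma aux_pow_expand {A : Type} [CommRing A] (t G : A) (e : ℕ) :
    ∃ y, (1 + t * G) ^ e = 1 + (e : A) * t * G + G ^ 2 * y := by
  induction e with
  | zero => exact ⟨0, by push_cast; ring⟩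
  | succ e ih =>
    obtain ⟨y, hy⟩ := ih
    refine ⟨y + (e : A) * t * t + y * t * G, ?_⟩
    rw [pow_succ, hy]; push_cast; ring

lemma aux_prod_expand {A : Type} [CommRing A] {ι : Type} (s : Finset ι)
    (t : ι → A) (e : ι → ℕ) (G : A) :
    ∃ Y, ∏ i ∈ s, (1 + t i * G) ^ e i
      = 1 + (∑ i ∈ s, (e i : A) * t i) * G + G ^ 2 * Y := by
  classical
  induction s using Finset.induction_on with
  | empty => exact ⟨0, by simp⟩
  | insert a s' hns ih =>
    obtain ⟨Y, hY⟩ := ih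
    obtain ⟨y, hy⟩ := aux_pow_expand (t a) G (e a)
    refine ⟨?_, ?_⟩
    · exact y + (e a:A) * t a * Y * G + y * (∑ i ∈ s', (e i:A) * t i) * G +
        (e a:A) * t a * (∑ i ∈ s', (e i:A) * t i) + Y + y * G ^ 2 * Y
    · rw [Finset.prod_insert hns, Finset.sum_insert hns, hY, hy]; ring

noncomputable def mOrd (p l k : ℕ) : ℕ := sInf {s | l ≤ k * p ^ s}

lemma mOrd_mem (hp : 2 ≤ p) (hk : 1 ≤ k) (l : ℕ) : l ≤ k * p ^ mOrd p l k := by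
  have hne : {s | l ≤ k * p ^ s}.Nonempty :=
    ⟨l, le_trans (le_of_lt (Nat.lt_pow_self (n := l) hp)) (Nat.le_mul_of_pos_left _ hk)⟩
  exact Nat.sInf_mem hne

lemma mOrd_spec (hp : 2 ≤ p) (hk : 1 ≤ k) (l s : ℕ) :
    k * p ^ s < l ↔ s < mOrd p l k := by
  constructor
  · intro h
    by_contra hs
    push_neg at hs
    have := mOrd_mem hp hk l
    have hmono : k * p ^ mOrd p l k ≤ k * p ^ s :=
      Nat.mul_le_mul_left _ (Nat.pow_le_pow_right (le_trans one_le_two hp) hs)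
    omega
  · intro h
    have : s ∉ {s | l ≤ k * p ^ s} := Nat.notMem_of_lt_sInf h
    simp only [Set.mem_setOf_eq] at this
    omega


lemma aux_unique_le {p k k' s s' : ℕ} (hp : p.Prime) (hk : ¬ p ∣ k)
    (hle : s ≤ s') (h : k * p ^ s = k' * p ^ s') : k = k' ∧ s = s' := by
  obtain ⟨d, rfl⟩ := Nat.exists_eq_add_of_le hle
  rw [pow_add, ← mul_assoc, mul_comm k' (p ^ s), mul_assoc, mul_comm k (p ^ s)] at h
  have hps : 0 < p ^ s := pow_pos hp.pos s
  have hkk : k = k' * p ^ d := Nat.eq_of_mul_eq_mul_left hps h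
  rcases Nat.eq_zero_or_pos d with rfl | hd
  · simp at hkk; omega
  · exfalso
    exact hk (hkk ▸ Dvd.dvd.mul_left (dvd_pow_self p hd.ne') k')

lemma aux_unique {p k k' s s' : ℕ} (hp : p.Prime) (hk : ¬ p ∣ k) (hk' : ¬ p ∣ k')
    (h : k * p ^ s = k' * p ^ s') : k = k' ∧ s = s' := by
  rcases le_total s s' with hle | hle
  · exact aux_unique_le hp hk hle h
  · obtain ⟨h1, h2⟩ := aux_unique_le hp hk' hle h.symm
    exact ⟨h1.symm, h2.symm⟩

lemma mOrd_sum (p : ℕ) (hp : p.Prime) (l : ℕ) :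
    ∑ k ∈ (Finset.range l).filter (fun k => 0 < k ∧ ¬ p ∣ k), mOrd p l k = l - 1 := by
  classical
  have hp2 : 2 ≤ p := hp.two_le
  set S := (Finset.range l).filter (fun k => 0 < k ∧ ¬ p ∣ k) with hS
  have hmemS : ∀ k, k ∈ S ↔ k < l ∧ 0 < k ∧ ¬ p ∣ k := by
    intro k; simp [hS, Finset.mem_filter, Finset.mem_range]
  have hdisj : (S : Set ℕ).PairwiseDisjoint
      (fun k => (Finset.range (mOrd p l k)).image (fun s => k * p ^ s)) := by
    intro k hk k' hk' hne
    simp only [Finset.mem_coe, hmemS] at hk hk'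
    refine Finset.disjoint_left.mpr ?_
    intro n hn hn'
    simp only [Finset.mem_image, Finset.mem_range] at hn hn'
    obtain ⟨s, _, rfl⟩ := hn
    obtain ⟨s', _, he⟩ := hn'
    exact hne (aux_unique hp hk.2.2 hk'.2.2 he.symm).1
  have hcover : (Finset.range l).filter (fun n => 0 < n)
      = S.biUnion (fun k => (Finset.range (mOrd p l k)).image (fun s => k * p ^ s)) := by
    ext n
    simp only [Finset.mem_filter, Finset.mem_range, Finset.mem_biUnion, Finset.mem_image]
    constructor
    · rintro ⟨hnl, hn0⟩
      have hn0' : n ≠ 0 := hn0.ne'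
      refine ⟨n / p ^ n.factorization p, ?_, n.factorization p, ?_, ?_⟩
      · rw [hmemS]
        refine ⟨lt_of_le_of_lt (Nat.div_le_self _ _) hnl, Nat.ordCompl_pos p hn0',
          Nat.not_dvd_ordCompl hp hn0'⟩
      · rw [← mOrd_spec hp2 (Nat.ordCompl_pos p hn0')]
        rw [mul_comm, Nat.ordProj_mul_ordCompl_eq_self]
        exact hnl
      · rw [mul_comm, Nat.ordProj_mul_ordCompl_eq_self]
    · rintro ⟨k, hk, s, hs, rfl⟩
      rw [hmemS] at hk
      rw [← mOrd_spec hp2 hk.2.1] at hs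
      exact ⟨hs, Nat.mul_pos hk.2.1 (pow_pos hp.pos s)⟩
  have hcard1 : ((Finset.range l).filter (fun n => 0 < n)).card = l - 1 := by
    have h2 : (Finset.range l).filter (fun n => 0 < n) = Finset.Ico 1 l := by
      ext n; simp only [Finset.mem_filter, Finset.mem_range, Finset.mem_Ico]; omega
    rw [h2, Nat.card_Ico]
  rw [← hcard1, hcover, Finset.card_biUnion (fun x hx y hy hxy => hdisj hx hy hxy)]
  refine Finset.sum_congr rfl ?_
  intro k hk
  rw [hmemS] at hk
  rw [Finset.card_image_of_injOn, Finset.card_range]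
  intro a _ b _ hab
  simp only at hab
  exact Nat.pow_right_injective hp2 (Nat.eq_of_mul_eq_mul_left hk.2.1 hab)


set_option maxHeartbeats 1000000 in
/-- With `a_{i,j,k}(x) = 1 + α^i x^j g(x)^k` for `0 ≤ i < δ`, `0 ≤ j < r`,
`1 ≤ k < l`, `p ∤ k`, one has `Π a_{i,j,k}(x)^{c_{(ijk)}} ≡ 1 (mod g(x)^l)` iff
`c_{(ijk)} ≡ 0 (mod ord(a_{i,j,k}))` for every triple, where `ord` is the
multiplicative order in the unit group of `𝔽_q[x]/(g(x)^l)`. -/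
theorem stmt_15
    (p δ : ℕ) (hp : p.Prime) (hδ : 1 ≤ δ)
    (F : Type) [Field F] [Fintype F] [CharP F p] (hcard : Fintype.card F = p ^ δ)
    (α : F) (hα : ∀ y : F, ∃ c : Fin δ → ℕ, y = ∑ i, (c i : F) * α ^ (i : ℕ))
    (r l : ℕ) (g : Polynomial F)
    (hmonic : g.Monic) (hirr : Irreducible g) (hdeg : g.natDegree = r)
    (hg0 : g.coeff 0 ≠ 0) (hl : 2 ≤ l)
    (c : Triples p δ r l → ℕ) :
    Ideal.Quotient.mk (Ideal.span {g ^ l})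
        (∏ v : Triples p δ r l,
          (1 + Polynomial.C (α ^ (v.1.1 : ℕ)) * X ^ (v.1.2.1 : ℕ)
            * g ^ (v.1.2.2 : ℕ)) ^ (c v)) = 1
    ↔ ∀ v : Triples p δ r l,
        orderOf (Ideal.Quotient.mk (Ideal.span {g ^ l})
          (1 + Polynomial.C (α ^ (v.1.1 : ℕ)) * X ^ (v.1.2.1 : ℕ)
            * g ^ (v.1.2.2 : ℕ))) ∣ c v := by
  classical
  haveI hfp := Fact.mk hp
  haveI hfi := Fact.mk hirr
  have hg0' : g ≠ 0 := hmonic.ne_zero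
  have hr : 0 < r := by
    rw [← hdeg]; exact natDegree_pos_iff_degree_pos.mpr (degree_pos_of_irreducible hirr)
  have hl1 : 1 ≤ l := le_trans one_le_two hl
  set I : Ideal (Polynomial F) := Ideal.span {g ^ l} with hI
  set B : Triples p δ r l → (Polynomial F ⧸ I) := fun v =>
    Ideal.Quotient.mk I (1 + Polynomial.C (α ^ (v.1.1 : ℕ)) * X ^ (v.1.2.1 : ℕ)
      * g ^ (v.1.2.2 : ℕ)) with hB
  -- the reduction mod g
  have hle : I ≤ Ideal.span {g} :=
    Ideal.span_singleton_le_span_singleton.2 (dvd_pow_self g (by omega))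
  set π : (Polynomial F ⧸ I) →+* AdjoinRoot g := Ideal.Quotient.factor hle
    with hπ
  -- frobenius computation in F[X]
  have hmk1 : ∀ (J : Ideal (Polynomial F)) (u : Polynomial F), u ∈ J →
      Ideal.Quotient.mk J (1 + u) = 1 := by
    intro J u hu
    rw [map_add, map_one, Ideal.Quotient.eq_zero_iff_mem.mpr hu, add_zero]
  have hfrob : ∀ (i j k s : ℕ), (1 + Polynomial.C (α ^ i) * X ^ j * g ^ k) ^ p ^ s
      = 1 + Polynomial.C (α ^ (i * p ^ s)) * X ^ (j * p ^ s) * g ^ (k * p ^ s) := by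
    intro i j k s
    rw [add_pow_char_pow, one_pow, mul_pow, mul_pow, ← map_pow, ← pow_mul, ← pow_mul,
      ← pow_mul]
  -- order bound
  have hBpow : ∀ v : Triples p δ r l, B v ^ p ^ mOrd p l (v.1.2.2 : ℕ) = 1 := by
    intro v
    have hk1 : 1 ≤ (v.1.2.2 : ℕ) := v.2.1
    have hmm : l ≤ (v.1.2.2 : ℕ) * p ^ mOrd p l (v.1.2.2 : ℕ) := mOrd_mem hp.two_le hk1 l
    rw [hB]
    simp only
    rw [← map_pow, hfrob]
    refine hmk1 _ _ ?_
    rw [hI, Ideal.mem_span_singleton]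
    exact Dvd.dvd.mul_left (pow_dvd_pow g hmm) _
  have hford : ∀ v : Triples p δ r l, IsOfFinOrder (B v) := by
    intro v
    exact isOfFinOrder_iff_pow_eq_one.2 ⟨p ^ mOrd p l (v.1.2.2 : ℕ), pow_pos hp.pos _, hBpow v⟩
  have hOdvd : ∀ v : Triples p δ r l, orderOf (B v) ∣ p ^ mOrd p l (v.1.2.2 : ℕ) :=
    fun v => orderOf_dvd_of_pow_eq_one (hBpow v)
  have hnpos : ∀ v : Triples p δ r l, 0 < orderOf (B v) := fun v => (hford v).orderOf_pos
  -- spanning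
  have hspanR : ∀ (s : ℕ) (h : Polynomial F), ∃ e : Fin δ → Fin r → ℕ, ∃ w : Polynomial F,
      h = (∑ i : Fin δ, ∑ j : Fin r,
        (e i j : Polynomial F) * (Polynomial.C (α ^ ((i : ℕ) * p ^ s)) * X ^ ((j : ℕ) * p ^ s)))
        + g * w := by
    intro s h
    haveI : Finite (AdjoinRoot g) := by
      haveI := (AdjoinRoot.powerBasis hg0').finite
      exact Module.finite_of_finite F
    haveI : CharP (AdjoinRoot g) p :=
      charP_of_injective_ringHom (algebraMap F (AdjoinRoot g)).injective p
    have hKsurj : Function.Surjective (fun x : AdjoinRoot g => x ^ p ^ s) := by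
      have hinj : Function.Injective (fun x : AdjoinRoot g => x ^ p ^ s) := by
        intro x y hxy
        simp only at hxy
        have h0 : (x - y) ^ p ^ s = 0 := by
          rw [sub_pow_char_pow, hxy, sub_self]
        have := pow_eq_zero_iff (pow_pos hp.pos s).ne' |>.mp h0
        rwa [sub_eq_zero] at this
      exact Finite.injective_iff_surjective.mp hinj
    obtain ⟨y', hy'⟩ := hKsurj (AdjoinRoot.mk g h)
    simp only at hy'
    obtain ⟨u, rfl⟩ := AdjoinRoot.mk_surjective y'
    have hg1 : g ≠ 1 := fun hh => hirr.not_isUnit (hh ▸ isUnit_one)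
    have hdeg' : (u %ₘ g).natDegree < r := by
      rw [← hdeg]; exact natDegree_modByMonic_lt u hmonic hg1
    have hmkeq : AdjoinRoot.mk g u = AdjoinRoot.mk g (u %ₘ g) := by
      rw [AdjoinRoot.mk_eq_mk]
      refine ⟨u /ₘ g, ?_⟩
      have := modByMonic_add_div u g
      linear_combination -this
    have hexp : AdjoinRoot.mk g (u %ₘ g)
        = ∑ j : Fin r, ((u %ₘ g).coeff (j : ℕ)) • (AdjoinRoot.root g) ^ (j : ℕ) := by
      rw [← AdjoinRoot.aeval_eq, aeval_eq_sum_range' hdeg',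
        ← Fin.sum_univ_eq_sum_range (fun j => ((u %ₘ g).coeff j) • (AdjoinRoot.root g) ^ j) r]
    choose cc hcc using hα
    refine ⟨fun i j => (cc ((u %ₘ g).coeff (j : ℕ)) i) ^ p ^ s, ?_⟩
    have hdvd : g ∣ h - (∑ i : Fin δ, ∑ j : Fin r,
        (((cc ((u %ₘ g).coeff (j : ℕ)) i) ^ p ^ s : ℕ) : Polynomial F)
          * (Polynomial.C (α ^ ((i : ℕ) * p ^ s)) * X ^ ((j : ℕ) * p ^ s))) := by
      rw [← AdjoinRoot.mk_eq_zero, map_sub, sub_eq_zero, ← hy', hmkeq, hexp,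
        sum_pow_char_pow]
      simp only [map_sum, map_mul, map_natCast, map_pow, AdjoinRoot.mk_C, AdjoinRoot.mk_X]
      rw [Finset.sum_comm]
      refine Finset.sum_congr rfl (fun j _ => ?_)
      rw [_root_.smul_pow, ← pow_mul]
      have hcj := hcc ((u %ₘ g).coeff (j : ℕ))
      nth_rewrite 1 [hcj]
      rw [sum_pow_char_pow, Finset.sum_smul]
      refine Finset.sum_congr rfl (fun i _ => ?_)
      rw [mul_pow, Algebra.smul_def, AdjoinRoot.algebraMap_eq, map_mul, ← pow_mul,
        map_pow, map_pow, map_natCast]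
      push_cast
      ring
    obtain ⟨w, hw⟩ := hdvd
    exact ⟨w, by linear_combination hw⟩
  -- main inductive surjectivity step
  have main : ∀ (d n : ℕ), l ≤ n + d → 1 ≤ n → ∀ h : Polynomial F,
      ∃ c' : Triples p δ r l → ℕ,
        Ideal.Quotient.mk I (1 + g ^ n * h) = ∏ v : Triples p δ r l, B v ^ c' v := by
    have base : ∀ n : ℕ, l ≤ n → ∀ h : Polynomial F,
        ∃ c' : Triples p δ r l → ℕ,
          Ideal.Quotient.mk I (1 + g ^ n * h) = ∏ v : Triples p δ r l, B v ^ c' v := by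
      intro n hn h
      refine ⟨0, ?_⟩
      simp only [Pi.zero_apply, pow_zero, Finset.prod_const_one]
      refine hmk1 I _ ?_
      rw [hI, Ideal.mem_span_singleton]
      exact (pow_dvd_pow g hn).mul_right h
    intro d
    induction d with
    | zero =>
      intro n hn _ h
      exact base n (by omega) h
    | succ d ih =>
      intro n hn hn1 h
      by_cases hcase : l ≤ n
      · exact base n hcase h
      push_neg at hcase
      set s0 := n.factorization p with hs0
      set k0 := n / p ^ s0 with hk0def
      have hn0 : n ≠ 0 := by omega
      have hk0n : k0 * p ^ s0 = n := by
        rw [hk0def, hs0, mul_comm]; exact Nat.ordProj_mul_ordCompl_eq_self n p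
      have hk0pos : 0 < k0 := Nat.ordCompl_pos p hn0
      have hk0nd : ¬ p ∣ k0 := Nat.not_dvd_ordCompl hp hn0
      have hk0l : k0 < l := lt_of_le_of_lt (Nat.div_le_self _ _) hcase
      obtain ⟨e, w, hew⟩ := hspanR s0 h
      set vij : Fin δ → Fin r → Triples p δ r l :=
        fun i j => ⟨(i, j, ⟨k0, hk0l⟩), ⟨hk0pos, hk0nd⟩⟩ with hvij
      set c1 : Triples p δ r l → ℕ := fun v =>
        if (v.1.2.2 : ℕ) = k0 then e v.1.1 v.1.2.1 * p ^ s0 else 0 with hc1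
      set t : Fin δ × Fin r → Polynomial F := fun w =>
        Polynomial.C (α ^ ((w.1 : ℕ) * p ^ s0)) * X ^ ((w.2 : ℕ) * p ^ s0) with ht
      set Tsum : Polynomial F := ∑ w : Fin δ × Fin r, ((e w.1 w.2 : ℕ) : Polynomial F) * t w
        with hTsum
      -- step 1 : the product of the chosen generators
      have hprod1 : (∏ v : Triples p δ r l, B v ^ c1 v)
          = Ideal.Quotient.mk I (∏ w : Fin δ × Fin r, (1 + t w * g ^ n) ^ (e w.1 w.2)) := by
        have hcond : ∀ v ∈ (Finset.univ : Finset (Triples p δ r l)),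
            B v ^ c1 v ≠ 1 → (v.1.2.2 : ℕ) = k0 := by
          intro v _ hne1
          by_contra hnp
          apply hne1
          rw [hc1]; simp only; rw [if_neg hnp, pow_zero]
        have himg2 : Finset.univ.filter (fun v : Triples p δ r l => (v.1.2.2 : ℕ) = k0)
            = Finset.image (fun w : Fin δ × Fin r => vij w.1 w.2) Finset.univ := by
          ext v
          simp only [Finset.mem_filter, Finset.mem_univ, true_and, Finset.mem_image]
          constructor
          · intro hv
            obtain ⟨⟨i1, j1, k1⟩, hvp⟩ := v
            refine ⟨(i1, j1), ?_⟩
            apply Subtype.ext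
            simp only [hvij]
            simp only at hv
            have : k1 = ⟨k0, hk0l⟩ := Fin.ext hv
            rw [this]
          · rintro ⟨w, rfl⟩
            rfl
        have hinj2 : ∀ a ∈ (Finset.univ : Finset (Fin δ × Fin r)),
            ∀ b ∈ Finset.univ, vij a.1 a.2 = vij b.1 b.2 → a = b := by
          intro a _ b _ hab
          obtain ⟨ia, ja⟩ := a
          obtain ⟨ib, jb⟩ := b
          simp only [hvij, Subtype.mk.injEq, Prod.mk.injEq] at hab
          rw [Prod.mk.injEq]
          exact ⟨hab.1, hab.2.1⟩
        calc (∏ v : Triples p δ r l, B v ^ c1 v)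
            = ∏ v ∈ Finset.univ.filter (fun v : Triples p δ r l => (v.1.2.2 : ℕ) = k0),
              B v ^ c1 v := (Finset.prod_filter_of_ne hcond).symm
          _ = ∏ w : Fin δ × Fin r, B (vij w.1 w.2) ^ c1 (vij w.1 w.2) := by
              rw [himg2, Finset.prod_image hinj2]
          _ = Ideal.Quotient.mk I
                (∏ w : Fin δ × Fin r, (1 + t w * g ^ n) ^ (e w.1 w.2)) := by
              rw [map_prod]
              refine Finset.prod_congr rfl (fun w _ => ?_)
              have hct : c1 (vij w.1 w.2) = e w.1 w.2 * p ^ s0 := by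
                simp [hc1, hvij]
              have hfr2 : (1 + Polynomial.C (α ^ ((w.1 : ℕ))) * X ^ ((w.2 : ℕ)) * g ^ k0)
                  ^ (p ^ s0) = 1 + t w * g ^ n := by
                rw [hfrob, hk0n, ht]
              rw [hct, hB, hvij]
              simp only
              rw [← map_pow, mul_comm (e w.1 w.2) (p ^ s0), pow_mul, hfr2]
      obtain ⟨Y, hY⟩ := aux_prod_expand (Finset.univ : Finset (Fin δ × Fin r)) t
        (fun w => e w.1 w.2) (g ^ n)
      have hTs : Tsum = ∑ i : Fin δ, ∑ j : Fin r,
          ((e i j : ℕ) : Polynomial F)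
            * (Polynomial.C (α ^ ((i : ℕ) * p ^ s0)) * X ^ ((j : ℕ) * p ^ s0)) := by
        rw [hTsum, Fintype.sum_prod_type]
      have hewT : h = Tsum + g * w := by rw [hTs]; exact hew
      obtain ⟨n', hn'⟩ : ∃ n', n = n' + 1 := ⟨n - 1, by omega⟩
      set z : Polynomial F := Tsum * g ^ n' + g ^ n' * g ^ n * Y with hz
      set W : Polynomial F := w - g ^ n' * Y with hW
      have hAz : (∏ w : Fin δ × Fin r, (1 + t w * g ^ n) ^ (e w.1 w.2)) = 1 + g * z := by
        rw [hY, ← hTsum, hz, hn']; ring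
      have hpoly : 1 + g ^ n * h = (1 + g * z) + g ^ (n + 1) * W := by
        rw [hewT, hz, hW, hn']; ring
      have hnil : IsNilpotent (Ideal.Quotient.mk I (g * z)) := by
        refine ⟨l, ?_⟩
        rw [← map_pow, Ideal.Quotient.eq_zero_iff_mem, hI, Ideal.mem_span_singleton, mul_pow]
        exact dvd_mul_right _ _
      have hAunit : IsUnit (Ideal.Quotient.mk I (1 + g * z)) := by
        have h2 : Ideal.Quotient.mk I (1 + g * z) = Ideal.Quotient.mk I (g * z) + 1 := by
          rw [map_add, map_one, add_comm]
        rw [h2]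
        exact IsNilpotent.isUnit_add_right_of_commute hnil isUnit_one (Commute.all _ _)
      obtain ⟨uA, huA⟩ := hAunit
      obtain ⟨w'', hw''⟩ := Ideal.Quotient.mk_surjective (I := I)
        (((uA⁻¹ : _ˣ) : Polynomial F ⧸ I) * Ideal.Quotient.mk I W)
      have hsplit : Ideal.Quotient.mk I (1 + g ^ n * h)
          = (uA : Polynomial F ⧸ I) + Ideal.Quotient.mk I (g ^ (n + 1)) 
            * Ideal.Quotient.mk I W := by
        rw [hpoly, map_add, map_mul, huA]
      have hX : ((uA⁻¹ : _ˣ) : Polynomial F ⧸ I) * Ideal.Quotient.mk I (1 + g ^ n * h)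
          = Ideal.Quotient.mk I (1 + g ^ (n + 1) * w'') := by
        rw [hsplit, map_add, map_one, map_mul, hw'', mul_add]
        rw [show ((uA⁻¹ : _ˣ) : Polynomial F ⧸ I) * (uA : Polynomial F ⧸ I) = 1 from
          uA.inv_mul]
        ring
      obtain ⟨c2, hc2⟩ := ih (n + 1) (by omega) (by omega) w''
      refine ⟨fun v => c1 v + c2 v, ?_⟩
      have hfinal : Ideal.Quotient.mk I (1 + g ^ n * h)
          = (∏ v : Triples p δ r l, B v ^ c1 v) * (∏ v : Triples p δ r l, B v ^ c2 v) := by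
        rw [hprod1, hAz, ← hc2, ← hX, ← mul_assoc, ← huA, Units.mul_inv, one_mul]
      rw [hfinal, ← Finset.prod_mul_distrib]
      exact Finset.prod_congr rfl (fun v _ => (pow_add _ _ _).symm)
  -- the principal unit set
  set S : Set (Polynomial F ⧸ I) := {w | π w = 1} with hSdef
  have hπmk : ∀ u : Polynomial F, π (Ideal.Quotient.mk I u) = AdjoinRoot.mk g u := by
    intro u
    exact Ideal.Quotient.factor_mk (S := I) (T := Ideal.span {g}) hle u
  have hπB : ∀ v : Triples p δ r l, π (B v) = 1 := by
    intro v
    rw [hB, hπ]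
    simp only
    rw [hπmk]
    rw [map_add, map_one, AdjoinRoot.mk_eq_zero.mpr
      (Dvd.dvd.mul_left (dvd_pow_self g v.2.1.ne') _), add_zero]
  have himg : ∀ c' : Triples p δ r l → ℕ, (∏ v : Triples p δ r l, B v ^ c' v) ∈ S := by
    intro c'
    rw [hSdef]
    simp only [Set.mem_setOf_eq, map_prod, map_pow]
    rw [Finset.prod_congr rfl (fun v _ => by rw [hπB v, one_pow])]
    exact Finset.prod_const_one
  have hsurj : ∀ w ∈ S, ∃ c' : Triples p δ r l → ℕ, w = ∏ v : Triples p δ r l, B v ^ c' v := by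
    intro w hw
    obtain ⟨u, rfl⟩ := Ideal.Quotient.mk_surjective (I := I) w
    have hw1 : π (Ideal.Quotient.mk I u) = 1 := hw
    rw [hπmk] at hw1
    have hdvd : g ∣ u - 1 := by
      rw [← AdjoinRoot.mk_eq_mk (f := g), map_one]
      exact hw1
    obtain ⟨y, hy⟩ := hdvd
    obtain ⟨c', hc'⟩ := main l 1 (by omega) le_rfl y
    refine ⟨c', ?_⟩
    rw [← hc']
    have hu : u = 1 + g ^ 1 * y := by rw [pow_one]; linear_combination hy
    rw [hu]
  have hcardS : Nat.card S = p ^ (δ * (r * (l - 1))) := by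
    have hgl1 : g ^ (l - 1) ≠ 0 := pow_ne_zero _ hg0'
    letI : Fintype (AdjoinRoot (g ^ (l - 1))) :=
      Module.fintypeOfFintype (AdjoinRoot.powerBasis hgl1).basis
    have hcardN : Nat.card (Polynomial F ⧸ (Ideal.span {g ^ (l - 1)} : Ideal (Polynomial F)))
        = p ^ (δ * (r * (l - 1))) := by
      have h1 : Nat.card (AdjoinRoot (g ^ (l - 1))) = p ^ (δ * (r * (l - 1))) := by
        rw [Nat.card_eq_fintype_card,
          Module.card_fintype (AdjoinRoot.powerBasis hgl1).basis, hcard, Fintype.card_fin,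
          AdjoinRoot.powerBasis_dim, natDegree_pow, hdeg, ← pow_mul]
        congr 1
        ring
      exact h1
    have hgsucc : g * g ^ (l - 1) = g ^ l := by
      rw [← pow_succ']
      congr 1
      omega
    have hcomap : (Ideal.span {g ^ (l - 1)} : Ideal (Polynomial F))
        ≤ Submodule.comap (LinearMap.mulLeft (Polynomial F) g) I := by
      intro x hx
      rw [Ideal.mem_span_singleton] at hx
      obtain ⟨y, rfl⟩ := hx
      simp only [Submodule.mem_comap, LinearMap.mulLeft_apply]
      rw [hI, Ideal.mem_span_singleton]
      refine ⟨y, ?_⟩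
      rw [← mul_assoc, hgsucc]
    set ψ := Submodule.mapQ (Ideal.span {g ^ (l - 1)} : Ideal (Polynomial F)) I
      (LinearMap.mulLeft (Polynomial F) g) hcomap with hψdef
    have hψmk : ∀ u : Polynomial F,
        ψ (Ideal.Quotient.mk (Ideal.span {g ^ (l - 1)}) u) = Ideal.Quotient.mk I (g * u) := by
      intro u
      exact Submodule.mapQ_apply (p := (Ideal.span {g ^ (l - 1)} : Ideal (Polynomial F)))
        (q := I) (LinearMap.mulLeft (Polynomial F) g) u
    have hmem2 : ∀ x, ((1 : Polynomial F ⧸ I) + ψ x) ∈ S := by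
      intro x
      obtain ⟨u, rfl⟩ := Ideal.Quotient.mk_surjective x
      rw [hψmk]
      show π _ = 1
      rw [← map_one (Ideal.Quotient.mk I), ← map_add, hπmk, map_add, map_one,
        AdjoinRoot.mk_eq_zero.mpr (Dvd.intro u rfl), add_zero]
    have hinj : Function.Injective (fun x => (1 : Polynomial F ⧸ I) + ψ x) := by
      intro x y hxy
      obtain ⟨u, rfl⟩ := Ideal.Quotient.mk_surjective x
      obtain ⟨u', rfl⟩ := Ideal.Quotient.mk_surjective y
      simp only at hxy
      have h2 := add_left_cancel hxy
      rw [hψmk, hψmk, Ideal.Quotient.eq, hI, Ideal.mem_span_singleton] at h2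
      rw [Ideal.Quotient.eq, Ideal.mem_span_singleton]
      have h3 : g * u - g * u' = g * (u - u') := by ring
      rw [h3, ← hgsucc] at h2
      exact (mul_dvd_mul_iff_left hg0').mp h2
    have hsurj2 : ∀ w ∈ S, ∃ x, (1 : Polynomial F ⧸ I) + ψ x = w := by
      intro w hw
      obtain ⟨u, rfl⟩ := Ideal.Quotient.mk_surjective (I := I) w
      have hw1 : π (Ideal.Quotient.mk I u) = 1 := hw
      rw [hπmk] at hw1
      have hdvd : g ∣ u - 1 := by
        rw [← AdjoinRoot.mk_eq_mk (f := g), map_one]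
        exact hw1
      obtain ⟨y, hy⟩ := hdvd
      refine ⟨Ideal.Quotient.mk _ y, ?_⟩
      rw [hψmk, ← map_one (Ideal.Quotient.mk I), ← map_add]
      congr 1
      linear_combination -hy
    have hbij : Function.Bijective
        (fun x : Polynomial F ⧸ (Ideal.span {g ^ (l - 1)} : Ideal (Polynomial F)) =>
          (⟨1 + ψ x, hmem2 x⟩ : ↥S)) := by
      constructor
      · intro x y hxy
        exact hinj (congrArg Subtype.val hxy)
      · rintro ⟨w, hw⟩
        obtain ⟨x, hx⟩ := hsurj2 w hw
        exact ⟨x, Subtype.ext hx⟩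
    rw [← Nat.card_eq_of_bijective _ hbij, hcardN]
  -- counting
  have hsum : ∑ v : Triples p δ r l, mOrd p l (v.1.2.2 : ℕ) = δ * (r * (l - 1)) := by
    have h1 : ∑ v : Triples p δ r l, mOrd p l (v.1.2.2 : ℕ)
        = ∑ w ∈ Finset.univ.filter
            (fun w : Fin δ × Fin r × Fin l => 0 < (w.2.2 : ℕ) ∧ ¬ p ∣ (w.2.2 : ℕ)),
          mOrd p l (w.2.2 : ℕ) :=
      (Finset.sum_subtype
        (p := fun w : Fin δ × Fin r × Fin l => 0 < (w.2.2 : ℕ) ∧ ¬ p ∣ (w.2.2 : ℕ))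
        (Finset.univ.filter
          (fun w : Fin δ × Fin r × Fin l => 0 < (w.2.2 : ℕ) ∧ ¬ p ∣ (w.2.2 : ℕ)))
        (fun x => by simp) (fun w => mOrd p l (w.2.2 : ℕ))).symm
    have hk : (∑ k : Fin l, if 0 < (k : ℕ) ∧ ¬ p ∣ (k : ℕ) then mOrd p l (k : ℕ) else 0)
        = l - 1 := by
      rw [Fin.sum_univ_eq_sum_range (fun k => if 0 < k ∧ ¬ p ∣ k then mOrd p l k else 0) l,
        ← Finset.sum_filter]
      exact mOrd_sum p hp l
    rw [h1, Finset.sum_filter]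
    simp_rw [Fintype.sum_prod_type]
    simp only [hk, Finset.sum_const, Finset.card_univ, Fintype.card_fin, smul_eq_mul]
  -- final assembly
  have key : (∏ v : Triples p δ r l, B v ^ c v) = 1
      ↔ ∀ v : Triples p δ r l, orderOf (B v) ∣ c v := by
    have hΦmem : ∀ x : (∀ v : Triples p δ r l, Fin (orderOf (B v))),
        (∏ v : Triples p δ r l, B v ^ ((x v : ℕ))) ∈ S := fun x => himg _
    set Φ : (∀ v : Triples p δ r l, Fin (orderOf (B v))) → ↥S :=
      fun x => ⟨∏ v : Triples p δ r l, B v ^ ((x v : ℕ)), hΦmem x⟩ with hΦ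
    have hΦsurj : Function.Surjective Φ := by
      rintro ⟨w, hw⟩
      obtain ⟨c', hc'⟩ := hsurj w hw
      refine ⟨fun v => ⟨c' v % orderOf (B v), Nat.mod_lt _ (hnpos v)⟩, ?_⟩
      rw [hΦ]
      apply Subtype.ext
      simp only
      rw [hc']
      exact Finset.prod_congr rfl (fun v _ => pow_mod_orderOf (B v) (c' v))
    haveI hfinS : Finite ↥S := Finite.of_surjective Φ hΦsurj
    letI : Fintype ↥S := Fintype.ofFinite _
    have hcardD : Nat.card (∀ v : Triples p δ r l, Fin (orderOf (B v)))
        = ∏ v : Triples p δ r l, orderOf (B v) := by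
      rw [Nat.card_pi]
      exact Finset.prod_congr rfl (fun v _ => by
        rw [Nat.card_eq_fintype_card, Fintype.card_fin])
    have hDdvd : (∏ v : Triples p δ r l, orderOf (B v)) ∣ p ^ (δ * (r * (l - 1))) := by
      rw [← hsum, ← Finset.prod_pow_eq_pow_sum]
      exact Finset.prod_dvd_prod_of_dvd _ _ (fun v _ => hOdvd v)
    have hcard_le : Nat.card ↥S ≤ Nat.card (∀ v : Triples p δ r l, Fin (orderOf (B v))) :=
      Nat.card_le_card_of_surjective Φ hΦsurj
    have hcard_eq : Nat.card (∀ v : Triples p δ r l, Fin (orderOf (B v))) = Nat.card ↥S := by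
      rw [hcardD, hcardS] at *
      have h3 : (∏ v : Triples p δ r l, orderOf (B v)) ≤ p ^ (δ * (r * (l - 1))) :=
        Nat.le_of_dvd (pow_pos hp.pos _) hDdvd
      omega
    have hΦbij : Function.Bijective Φ := by
      rw [Fintype.bijective_iff_surjective_and_card]
      exact ⟨hΦsurj, by rw [← Nat.card_eq_fintype_card, ← Nat.card_eq_fintype_card, hcard_eq]⟩
    constructor
    · intro h1 v
      have hx : Φ (fun v => ⟨c v % orderOf (B v), Nat.mod_lt _ (hnpos v)⟩)
          = Φ (fun v => ⟨0, hnpos v⟩) := by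
        rw [hΦ]
        apply Subtype.ext
        simp only
        rw [Finset.prod_congr rfl (fun v _ => pow_mod_orderOf (B v) (c v)), h1]
        simp
      have := congrFun (hΦbij.1 hx) v
      have hmod : c v % orderOf (B v) = 0 := congrArg Fin.val this
      exact Nat.dvd_of_mod_eq_zero hmod
    · intro h2
      rw [Finset.prod_congr rfl
        (fun v _ => orderOf_dvd_iff_pow_eq_one.mp (h2 v))]
      exact Finset.prod_const_one
  simpa only [hB, ← map_pow, ← map_prod] using key
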